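/- arXiv:1805.05169 — 2 statements merged into one kernel-verified Lean document; each statement's English description precedes it below -/
import Mathlib

section
/- Suppose λ and λ' are real roots of p with λ ≠ λ'. Then λ' − λ is a root of the polynomial q(w) = w^{n-1} + Σ_{i=2}^{n-1} (Σ_{k=i}^{n} a_k C(k,i) λ^{k-i}) w^{i-1} + (n λ^{n-1} + Σ_{i=1}^{n-1} i a_i λ^{i-1}), which is the characteristic polynomial of the reduced equation with parameter μ = λ. Consequently, if p has n distinct real roots λ_1 > λ_2 > … > λ_n, then for each i the set of roots of the characteristic polynomial of the reduced equation with μ = λ_i is exactly {λ_j − λ_i : j ≠ i} = {γ_j(λ_i) : j = 1,…,n−1}, where γ_j(λ_i) = λ_j − λ_i for j = 1,…,i−1 and γ_j(λ_i) = λ_{j+1} − λ_i for j = i,…,n−1. -/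
open MeasureTheory Filter Finset Real Set

noncomputable section

/-- Heaviside function: 1 for `0 ≤ x`, 0 otherwise. -/
def heav (x : ℝ) : ℝ := if 0 ≤ x then 1 else 0

/-- `Υ₀ = ∏_{i<j} (γ_j - γ_i)`. -/
def ups0 {d : ℕ} (γ : Fin d → ℝ) : ℝ :=
  ∏ p ∈ Finset.univ.filter (fun p : Fin d × Fin d => p.1 < p.2), (γ p.2 - γ p.1)

/-- `Υ_ℓ = ∏_{i<j, i≠ℓ, j≠ℓ} (γ_j - γ_i)`. -/
def upsl {d : ℕ} (γ : Fin d → ℝ) (ℓ : Fin d) : ℝ :=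
  ∏ p ∈ Finset.univ.filter
      (fun p : Fin d × Fin d => p.1 < p.2 ∧ p.1 ≠ ℓ ∧ p.2 ≠ ℓ), (γ p.2 - γ p.1)

/-- The kernel `g_j(t,s)` (the `j`-th `t`-derivative of the Green function
off the diagonal).  Here the index `ℓ : Fin d` corresponds to `ℓ+1 = 1,…,d`. -/
def kern {d : ℕ} (γ : Fin d → ℝ) (j : ℕ) (t s : ℝ) : ℝ :=
  -(1 / ups0 γ) *
    ∑ ℓ : Fin d, ((-1 : ℝ) ^ ((ℓ : ℕ) + 1) * upsl γ ℓ) * (-γ ℓ) ^ j *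
      Real.exp (-γ ℓ * (t - s)) * heav ((if 0 < γ ℓ then (1 : ℝ) else -1) * (t - s))

/-- Multi-indices `α ∈ ℕ₀^d` with `|α| ≤ n`. -/
def mSet (n d : ℕ) : Finset (Fin d → ℕ) :=
  (Fintype.piFinset fun _ : Fin d => Finset.range (n + 1)).filter fun α => ∑ i, α i ≤ n

/-- Multi-indices `α ∈ ℕ₀^d` with `|α| = k` (for `k ≤ n`). -/
def mDeg (n d k : ℕ) : Finset (Fin d → ℕ) :=
  (Fintype.piFinset fun _ : Fin d => Finset.range (n + 1)).filter fun α => ∑ i, α i = k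

/-- `P(t,x) = Σ_{0 ≤ |α| ≤ n} Ω_α(t) x^α`. -/
def Ppoly (n d : ℕ) (Ω : (Fin d → ℕ) → ℝ → ℝ) (t : ℝ) (x : Fin d → ℝ) : ℝ :=
  ∑ α ∈ mSet n d, Ω α t * ∏ i, x i ^ α i

/-- `k`-th derivative on `[t₀,∞)`. -/
def iDer (t₀ : ℝ) (k : ℕ) (z : ℝ → ℝ) : ℝ → ℝ := iteratedDerivWithin k z (Set.Ici t₀)

/-- Membership in `C₀^{n-2}([t₀,∞))`. -/
def memC0 (n : ℕ) (t₀ : ℝ) (z : ℝ → ℝ) : Prop :=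
  ContDiffOn ℝ (n - 2 : ℕ) z (Set.Ici t₀) ∧
    ∀ k ≤ n - 2, Filter.Tendsto (iDer t₀ k z) Filter.atTop (nhds 0)

/-- `‖z‖₀ < 1`, i.e. `sup_{t ≥ t₀} Σ_{k=0}^{n-2} |z^(k)(t)| < 1`. -/
def normLt1 (n : ℕ) (t₀ : ℝ) (z : ℝ → ℝ) : Prop :=
  ∃ c < (1 : ℝ), ∀ t ≥ t₀, ∑ k ∈ Finset.range (n - 1), |iDer t₀ k z t| ≤ c

/-- `z` is an `(n-1)`-times differentiable solution on `[t₀,∞)` of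
`z^(n-1) + Σ_{i=0}^{n-2} b_i z^(i) = P(t, z, z', …, z^(n-2))`. -/
def isRicSol (n : ℕ) (t₀ : ℝ) (b : ℕ → ℝ) (Ω : (Fin (n - 1) → ℕ) → ℝ → ℝ)
    (z : ℝ → ℝ) : Prop :=
  (∀ m < n - 1, DifferentiableOn ℝ (iDer t₀ m z) (Set.Ici t₀)) ∧
    ∀ t ≥ t₀,
      iDer t₀ (n - 1) z t + ∑ i ∈ Finset.range (n - 1), b i * iDer t₀ i z t =
        Ppoly n (n - 1) Ω t fun j => iDer t₀ (j : ℕ) z t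

/-- `R(t)`. -/
def Rfun (n : ℕ) (t₀ : ℝ) (γ : Fin (n - 1) → ℝ) (Ω : (Fin (n - 1) → ℕ) → ℝ → ℝ)
    (t : ℝ) : ℝ :=
  ∑ j ∈ Finset.range (n - 1), |∫ s in Set.Ioi t₀, kern γ j t s * Ω (fun _ => 0) s|

/-- `L_k(t)`. -/
def Lfun (n : ℕ) (t₀ : ℝ) (γ : Fin (n - 1) → ℝ) (Ω : (Fin (n - 1) → ℕ) → ℝ → ℝ)
    (k : ℕ) (t : ℝ) : ℝ :=
  ∫ s in Set.Ioi t₀,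
    (∑ j ∈ Finset.range (n - 1), |kern γ j t s|) * ∑ α ∈ mDeg n (n - 1) k, |Ω α s|

/-- `Φ₁`. -/
def Phi1 {d : ℕ} (n : ℕ) (γ : Fin d → ℝ) : ℝ :=
  |ups0 γ|⁻¹ * ∑ ℓ : Fin d, |upsl γ ℓ| * ∑ j ∈ Finset.range (n - 1), |γ ℓ| ^ j

/-- `p(x) = Σ_{k=0}^n a_k x^k`. -/
def pEval (n : ℕ) (a : ℕ → ℝ) (x : ℝ) : ℝ := ∑ k ∈ Finset.range (n + 1), a k * x ^ k

/-- `γ_j(λ_i)` (0-based indices). -/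
def gam {n : ℕ} (lam : Fin n → ℝ) (i : Fin n) (j : Fin (n - 1)) : ℝ :=
  if h : (j : ℕ) < (i : ℕ) then
    lam ⟨(j : ℕ), lt_of_lt_of_le (lt_of_lt_of_le j.isLt (Nat.sub_le n 1)) le_rfl⟩ - lam i
  else
    lam ⟨(j : ℕ) + 1, by have := j.isLt; omega⟩ - lam i

/-- characteristic polynomial of the reduced equation with parameter `μ`. -/
def qEval (n : ℕ) (a : ℕ → ℝ) (μ : ℝ) (w : ℝ) : ℝ :=
  w ^ (n - 1) +
    (∑ i ∈ Finset.Ico 2 n,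
      (∑ k ∈ Finset.Icc i n, a k * (Nat.choose k i : ℝ) * μ ^ (k - i)) * w ^ (i - 1)) +
    ((n : ℝ) * μ ^ (n - 1) + ∑ i ∈ Finset.Ico 1 n, (i : ℝ) * a i * μ ^ (i - 1))

/-- slot values for `w = z + μ`: `w^(0) = z+μ`, `w^(ℓ) = z^(ℓ)` for `ℓ ≥ 1`;
`v k` stands for `z^(k)(t)`. -/
def wD (μ : ℝ) (v : ℕ → ℝ) (ℓ : ℕ) : ℝ := if ℓ = 0 then v 0 + μ else v ℓ

/-- partial sums of a tuple: `psum ℓ r = ℓ_1 + … + ℓ_r` (0-based entries). -/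
def psum {m : ℕ} (ℓ : Fin m → ℕ) (r : ℕ) : ℕ :=
  ∑ q ∈ Finset.univ.filter (fun q : Fin m => (q : ℕ) < r), ℓ q

/-- `S_{0,j}`. -/
def S0 (μ : ℝ) (v : ℕ → ℝ) (j : ℕ) : ℝ :=
  wD μ v (j - 1) + ((j : ℝ) - 1) * wD μ v (j - 2) * wD μ v 0

open Classical in
/-- `S_{m,j}` for `m ≥ 1`. -/
def Sm (μ : ℝ) (v : ℕ → ℝ) (m j : ℕ) : ℝ :=
  ∑ ℓ ∈ (Fintype.piFinset fun _ : Fin m => Finset.range (j + 1)).filter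
      (fun ℓ => ∀ r ∈ Finset.Icc 1 m, psum ℓ r + m + 2 ≤ j),
    ((j - 1).choose (psum ℓ 1) : ℝ) *
      (∏ i ∈ Finset.Ico 1 m,
        (((j - psum ℓ i - i - 1).choose (psum ℓ (i + 1) - psum ℓ i) : ℕ) : ℝ)) *
      (∏ i : Fin m, wD μ v (ℓ i)) *
      (wD μ v (j - psum ℓ m - m - 1) +
        ((j - psum ℓ m - m - 1 : ℕ) : ℝ) * wD μ v (j - psum ℓ m - m - 2) * wD μ v 0)

/-- `S_{m,j}` for all `m ≥ 0`. -/
def Sfull (μ : ℝ) (v : ℕ → ℝ) (m j : ℕ) : ℝ :=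
  if m = 0 then S0 μ v j else Sm μ v m j

/-- The nonlinearity `F(μ, t, r₀(t),…,r_{n-1}(t), v₀,…,v_{n-2})`. -/
def Ffun (n : ℕ) (a : ℕ → ℝ) (r : ℕ → ℝ → ℝ) (μ : ℝ) (t : ℝ) (v : ℕ → ℝ) : ℝ :=
  ((n : ℝ) - 1) * v (n - 2) * v 0 + (∑ m ∈ Finset.Icc 1 (n - 3), Sfull μ v m n) +
    (∑ i ∈ Finset.Ico 3 n,
      (a i * (((i : ℝ) - 1) * v (i - 2) * v 0 + (∑ m ∈ Finset.Icc 1 (i - 3), Sfull μ v m i) +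
          v (i - 1) * v 1 + ∑ j ∈ Finset.Icc 1 (i - 2), (Nat.choose i j : ℝ) * v (i - j) * μ ^ j) +
        r i t * ((∑ m ∈ Finset.Icc 0 (i - 3), Sfull μ v m i) + v (i - 1) * v 1 +
          (v 0 + μ) ^ i))) +
    a 2 * v 0 ^ 2 + r 2 t * (v 1 + (v 0 + μ) ^ 2) + r 1 t * (v 0 + μ) + r 0 t

/-- `ℍ(t,μ)`. -/
def Hfun (n : ℕ) (a : ℕ → ℝ) (r : ℕ → ℝ → ℝ) (μ : ℝ) (t : ℝ) : ℝ :=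
  Ffun n a r μ t (fun _ => 1) - Ffun n a r μ t (fun _ => 0)

/-- Linear part of the reduced equation, applied to `z` at `t`. -/
def reducedLHS (n : ℕ) (a : ℕ → ℝ) (μ : ℝ) (t₀ : ℝ) (z : ℝ → ℝ) (t : ℝ) : ℝ :=
  iDer t₀ (n - 1) z t +
    (∑ i ∈ Finset.Ico 2 n,
      (∑ k ∈ Finset.Icc i n, a k * (Nat.choose k i : ℝ) * μ ^ (k - i)) * iDer t₀ (i - 1) z t) +
    ((n : ℝ) * μ ^ (n - 1) + ∑ i ∈ Finset.Ico 1 n, (i : ℝ) * a i * μ ^ (i - 1)) * z t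

/-- `z` is an `(n-1)`-times differentiable solution on `[t₀,∞)` of the reduced
equation with parameter `μ`. -/
def isReducedSol (n : ℕ) (a : ℕ → ℝ) (r : ℕ → ℝ → ℝ) (μ : ℝ) (t₀ : ℝ) (z : ℝ → ℝ) : Prop :=
  (∀ m < n - 1, DifferentiableOn ℝ (iDer t₀ m z) (Set.Ici t₀)) ∧
    ∀ t ≥ t₀, reducedLHS n a μ t₀ z t = -Ffun n a r μ t fun k => iDer t₀ k z t

/-- `y` is an `n`-times differentiable solution on `[t₀,∞)` of the Poincaré-type
equation `y^(n) + Σ_{i=0}^{n-1} (a_i + r_i(t)) y^(i) = 0`. -/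
def isPoincareSol (n : ℕ) (a : ℕ → ℝ) (r : ℕ → ℝ → ℝ) (t₀ : ℝ) (y : ℝ → ℝ) : Prop :=
  (∀ m < n, DifferentiableOn ℝ (iDer t₀ m y) (Set.Ici t₀)) ∧
    ∀ t ≥ t₀, iDer t₀ n y t + ∑ i ∈ Finset.range n, (a i + r i t) * iDer t₀ i y t = 0

/-- Wronskian `W[y_1,…,y_n](t) = det (y_i^{(j-1)}(t))`. -/
def wron (n : ℕ) (t₀ : ℝ) (y : Fin n → ℝ → ℝ) (t : ℝ) : ℝ :=
  Matrix.det (Matrix.of fun i j : Fin n => iDer t₀ (j : ℕ) (y i) t)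


/-- `C₀`-norm: `‖z‖₀ = sup_{t ≥ t₀} Σ_{k=0}^{n-2} |z^(k)(t)|`. -/
noncomputable def C0norm (n : ℕ) (t₀ : ℝ) (z : ℝ → ℝ) : ℝ :=
  ⨆ t : Set.Ici t₀, ∑ k ∈ Finset.range (n - 1), |iDer t₀ k z (t : ℝ)|

/-- `π_i = Π_{j ≠ i} (λ_j - λ_i)`. -/
noncomputable def pii {n : ℕ} (lam : Fin n → ℝ) (i : Fin n) : ℝ :=
  ∏ j ∈ Finset.univ.filter (fun j : Fin n => j ≠ i), (lam j - lam i)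

/-- Hypothesis (H2), together with finiteness of the corresponding integrals. -/
def hypH2 (n : ℕ) (t₀ : ℝ) (r : ℕ → ℝ → ℝ) (lam : Fin n → ℝ) : Prop :=
  ∀ i : Fin n,
    (∀ ℓ < n, ∀ t ≥ t₀, ∀ j ≤ n - 2,
      MeasureTheory.IntegrableOn (fun s => kern (gam lam i) j t s * r ℓ s) (Set.Ioi t₀)) ∧
    (∀ t ≥ t₀,
      MeasureTheory.IntegrableOn
        (fun s => (∑ j ∈ Finset.range (n - 1), |kern (gam lam i) j t s|) *
          |∑ ℓ ∈ Finset.range n, lam i ^ ℓ * r ℓ s|) (Set.Ioi t₀)) ∧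
    (∀ ℓ < n,
      Filter.Tendsto
        (fun t => ∑ j ∈ Finset.range (n - 1), |∫ s in Set.Ioi t₀, kern (gam lam i) j t s * r ℓ s|)
        Filter.atTop (nhds 0)) ∧
    Filter.Tendsto
      (fun t => ∫ s in Set.Ioi t₀,
        (∑ j ∈ Finset.range (n - 1), |kern (gam lam i) j t s|) *
          |∑ ℓ ∈ Finset.range n, lam i ^ ℓ * r ℓ s|)
      Filter.atTop (nhds 0)

/-- Hypothesis (H3). -/
def hypH3 (n : ℕ) (t₀ : ℝ) (a : ℕ → ℝ) (r : ℕ → ℝ → ℝ) (lam : Fin n → ℝ) : Prop :=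
  ∀ i : Fin n, ∀ k : Fin (n - 1), ∃ σ : ℝ, 0 ≤ σ ∧ σ < 1 / Phi1 n (gam lam i) ∧
    ∀ t ≥ t₀,
      (∫ s in Set.Ioi t₀, Real.exp (-(gam lam i k) * (t - s)) * |Hfun n a r (lam i) s|) ≤ σ

end

section AUX
lemma aux_key (n : ℕ) (hn : 2 ≤ n) (a : ℕ → ℝ) (han : a n = 1) (μ w : ℝ) :
    w * qEval n a μ w = pEval n a (w + μ) - pEval n a μ := by
  have h1 : pEval n a (w + μ)
      = ∑ i ∈ Finset.range (n+1),
        (∑ k ∈ Finset.Icc i n, a k * (Nat.choose k i : ℝ) * μ ^ (k - i)) * w ^ i := by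
    unfold pEval
    have step : ∀ k ∈ Finset.range (n+1),
        a k * (w + μ) ^ k
          = ∑ i ∈ Finset.range (k+1), a k * (Nat.choose k i : ℝ) * μ ^ (k - i) * w ^ i := by
      intro k _
      rw [add_pow]
      rw [Finset.mul_sum]
      exact Finset.sum_congr rfl fun i _ => by ring
    rw [Finset.sum_congr rfl step]
    rw [Finset.sum_comm' (s := Finset.range (n+1)) (t := fun k => Finset.range (k+1))
      (t' := Finset.range (n+1)) (s' := fun i => Finset.Icc i n)
      (by intro k i; simp [Finset.mem_range, Finset.mem_Icc]; omega)]
    exact Finset.sum_congr rfl fun i _ => by rw [← Finset.sum_mul]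
  -- split off i = 0 term
  have h0 : (∑ k ∈ Finset.Icc 0 n, a k * (Nat.choose k 0 : ℝ) * μ ^ (k - 0)) = pEval n a μ := by
    unfold pEval
    rw [show Finset.Icc 0 n = Finset.range (n+1) by ext x; simp [Nat.lt_succ_iff]]
    exact Finset.sum_congr rfl fun k _ => by simp
  have c1 : (∑ k ∈ Finset.Icc 1 n, a k * (Nat.choose k 1 : ℝ) * μ ^ (k - 1))
      = (n : ℝ) * μ ^ (n - 1) + ∑ i ∈ Finset.Ico 1 n, (i : ℝ) * a i * μ ^ (i - 1) := by
    have : Finset.Icc 1 n = insert n (Finset.Ico 1 n) := by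
      ext x; simp [Finset.mem_Icc, Finset.mem_Ico, Finset.mem_insert]; omega
    rw [this, Finset.sum_insert (by simp)]
    simp [han]
    exact Finset.sum_congr rfl fun i _ => by ring
  have cn : (∑ k ∈ Finset.Icc n n, a k * (Nat.choose k n : ℝ) * μ ^ (k - n)) = 1 := by
    simp [han]
  -- now rewrite RHS
  rw [h1]
  have hsplit : Finset.range (n+1) = insert 0 (insert n (Finset.Ico 1 n)) := by
    ext x; simp [Finset.mem_range, Finset.mem_Ico]; omega
  rw [hsplit, Finset.sum_insert (by simp; omega), Finset.sum_insert (by simp)]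
  have hI : Finset.Ico 1 n = insert 1 (Finset.Ico 2 n) := by
    ext x; simp; omega
  rw [hI, Finset.sum_insert (by simp)]
  simp only [pow_zero, mul_one]
  rw [h0]
  have : (∑ k ∈ Finset.Icc n n, a k * (Nat.choose k n : ℝ) * μ ^ (k - n)) * w ^ n = w ^ n := by
    rw [cn, one_mul]
  rw [this]
  unfold qEval
  rw [← c1]
  have hw : w ^ n = w * w ^ (n-1) := by
    rw [← pow_succ']
    congr 1; omega
  have hsum : ∑ i ∈ Finset.Ico 2 n,
      (∑ k ∈ Finset.Icc i n, a k * (Nat.choose k i : ℝ) * μ ^ (k - i)) * w ^ i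
      = w * ∑ i ∈ Finset.Ico 2 n,
        (∑ k ∈ Finset.Icc i n, a k * (Nat.choose k i : ℝ) * μ ^ (k - i)) * w ^ (i-1) := by
    rw [Finset.mul_sum]
    refine Finset.sum_congr rfl fun i hi => ?_
    simp only [Finset.mem_Ico] at hi
    have : w ^ i = w * w ^ (i-1) := by rw [← pow_succ']; congr 1; omega
    rw [this]; ring
  rw [hw, hsum]
  ring

lemma aux_pfact (n : ℕ) (hn : 2 ≤ n) (a : ℕ → ℝ) (han : a n = 1) (lam : Fin n → ℝ)
    (hinj : Function.Injective lam) (hroot : ∀ i, pEval n a (lam i) = 0) :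
    ∀ x, pEval n a x = ∏ j, (x - lam j) := by
  classical
  set P : Polynomial ℝ := ∑ k ∈ Finset.range (n+1), Polynomial.C (a k) * Polynomial.X ^ k with hP
  have hev : ∀ x, P.eval x = pEval n a x := by
    intro x; simp [hP, pEval, Polynomial.eval_finset_sum]
  have hcoeff : ∀ m, P.coeff m = if m ≤ n then a m else 0 := by
    intro m
    rw [hP, Polynomial.finset_sum_coeff]
    simp only [Polynomial.coeff_C_mul, Polynomial.coeff_X_pow]
    by_cases h : m ≤ n
    · rw [Finset.sum_eq_single m]
      · simp [h]
      · intro b _ hb; simp [Ne.symm hb]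
      · intro hm; simp [Nat.lt_succ_iff] at hm; omega
    · rw [if_neg h]
      apply Finset.sum_eq_zero
      intro k hk
      simp only [Finset.mem_range, Nat.lt_succ_iff] at hk
      simp [show m ≠ k by omega]
  have hcn : P.coeff n = 1 := by rw [hcoeff]; simp [han]
  have hne : P ≠ 0 := fun h => by rw [h] at hcn; simp at hcn
  have hdegle : P.natDegree ≤ n := by
    rw [Polynomial.natDegree_le_iff_coeff_eq_zero]
    intro m hm; rw [hcoeff, if_neg (by omega)]
  have hdeg : P.natDegree = n :=
    le_antisymm hdegle (Polynomial.le_natDegree_of_ne_zero (by rw [hcn]; exact one_ne_zero))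
  have hmon : P.Monic := Polynomial.monic_of_natDegree_le_of_coeff_eq_one n hdegle hcn
  set M : Multiset ℝ := Finset.univ.val.map lam with hM
  have hMnd : M.Nodup := Multiset.Nodup.map hinj Finset.univ.nodup
  have hMcard : M.card = n := by simp [hM]
  have hle : M ≤ P.roots := by
    rw [Multiset.le_iff_count]
    intro x
    by_cases hx : x ∈ M
    · have h1 : M.count x = 1 := Multiset.count_eq_one_of_mem hMnd hx
      obtain ⟨i, _, hi⟩ := Multiset.mem_map.mp hx
      have hxr : x ∈ P.roots := by
        rw [Polynomial.mem_roots hne]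
        rw [Polynomial.IsRoot, hev, ← hi]; exact hroot i
      rw [h1]; exact Multiset.one_le_count_iff_mem.mpr hxr
    · simp [Multiset.count_eq_zero_of_notMem hx]
  have hre : M = P.roots := by
    refine Multiset.eq_of_le_of_card_le hle ?_
    rw [hMcard]
    calc P.roots.card ≤ P.natDegree := P.card_roots' 
    _ = n := hdeg
  have hsp : P.Splits := by
    rw [Polynomial.splits_iff_card_roots, ← hre, hMcard, hdeg]
  have hfac := hsp.eq_prod_roots_of_monic hmon
  intro x
  rw [← hev, hfac, ← hre, Polynomial.eval_multiset_prod, hM, Multiset.map_map, Multiset.map_map]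
  rw [Finset.prod_eq_multiset_prod]
  congr 1
  apply Multiset.map_congr rfl
  intro j _
  simp

lemma aux_qcont (n : ℕ) (a : ℕ → ℝ) (μ : ℝ) : Continuous (fun w => qEval n a μ w) := by
  unfold qEval
  apply Continuous.add
  apply Continuous.add
  · exact continuous_pow _
  · exact continuous_finset_sum _ fun i _ => continuous_const.mul (continuous_pow _)
  · exact continuous_const

lemma aux_qfact (n : ℕ) (hn : 2 ≤ n) (a : ℕ → ℝ) (han : a n = 1) (lam : Fin n → ℝ)
    (hinj : Function.Injective lam) (hroot : ∀ i, pEval n a (lam i) = 0) (i : Fin n) :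
    ∀ w, qEval n a (lam i) w = ∏ j ∈ Finset.univ.erase i, (w - (lam j - lam i)) := by
  have hfun : (fun w => qEval n a (lam i) w)
      = fun w => ∏ j ∈ Finset.univ.erase i, (w - (lam j - lam i)) := by
    have hg : Continuous (fun w : ℝ => ∏ j ∈ Finset.univ.erase i, (w - (lam j - lam i))) :=
      continuous_finset_prod _ fun j _ => continuous_id.sub continuous_const
    apply Continuous.ext_on (dense_compl_singleton (0:ℝ)) (aux_qcont n a (lam i)) hg
    intro w hw
    have hw0 : w ≠ 0 := hw
    apply mul_left_cancel₀ hw0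
    rw [aux_key n hn a han (lam i) w, aux_pfact n hn a han lam hinj hroot (w + lam i),
      hroot i, sub_zero]
    rw [← Finset.mul_prod_erase Finset.univ _ (Finset.mem_univ i)]
    rw [show w + lam i - lam i = w by ring]
    congr 1
    exact Finset.prod_congr rfl fun j _ => by ring
  intro w
  exact congrFun hfun w

theorem stmt3 (n : ℕ) (hn : 2 ≤ n) (a : ℕ → ℝ) (han : a n = 1) :
    (∀ lam lam' : ℝ, pEval n a lam = 0 → pEval n a lam' = 0 → lam ≠ lam' →
      qEval n a lam (lam' - lam) = 0) ∧
    (∀ lam : Fin n → ℝ, StrictAnti lam → (∀ i, pEval n a (lam i) = 0) → ∀ i : Fin n,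
      {w : ℝ | qEval n a (lam i) w = 0} = {w : ℝ | ∃ j : Fin n, j ≠ i ∧ w = lam j - lam i} ∧
      Set.range (gam lam i) = {w : ℝ | ∃ j : Fin n, j ≠ i ∧ w = lam j - lam i}) := by
  constructor
  · intro lam lam' h1 h2 hne
    have hkey := aux_key n hn a han lam (lam' - lam)
    rw [show lam' - lam + lam = lam' by ring, h1, h2, sub_zero] at hkey
    rcases mul_eq_zero.mp hkey with h | h
    · exact absurd h (sub_ne_zero.mpr (Ne.symm hne))
    · exact h
  · intro lam hsa hroot i
    have hinj : Function.Injective lam := hsa.injective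
    constructor
    · ext w
      simp only [Set.mem_setOf_eq]
      rw [aux_qfact n hn a han lam hinj hroot i w, Finset.prod_eq_zero_iff]
      constructor
      · rintro ⟨j, hj, hj0⟩
        exact ⟨j, Finset.ne_of_mem_erase hj, by linarith [sub_eq_zero.mp hj0]⟩
      · rintro ⟨j, hj, rfl⟩
        exact ⟨j, Finset.mem_erase.mpr ⟨hj, Finset.mem_univ j⟩, by ring⟩
    · ext w
      simp only [Set.mem_range, Set.mem_setOf_eq]
      constructor
      · rintro ⟨j, rfl⟩
        unfold gam
        split
        · rename_i h
          refine ⟨⟨(j : ℕ), by omega⟩, ?_, rfl⟩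
          intro hc
          apply absurd (congrArg Fin.val hc)
          simp only [Fin.val_mk]; omega
        · rename_i h
          refine ⟨⟨(j : ℕ) + 1, by have := j.isLt; omega⟩, ?_, rfl⟩
          intro hc
          apply absurd (congrArg Fin.val hc)
          simp only [Fin.val_mk]; omega
      · rintro ⟨j, hj, rfl⟩
        have hji : (j : ℕ) ≠ (i : ℕ) := fun h => hj (Fin.ext h)
        rcases Nat.lt_or_ge (j : ℕ) (i : ℕ) with h | h
        · refine ⟨⟨(j : ℕ), by have := i.isLt; omega⟩, ?_⟩
          unfold gam
          rw [dif_pos (by simpa using h)]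
        · have hij : (i : ℕ) < (j : ℕ) := by omega
          refine ⟨⟨(j : ℕ) - 1, by have := j.isLt; omega⟩, ?_⟩
          unfold gam
          rw [dif_neg (by simp only [Fin.val_mk]; omega)]
          exact congrArg (fun x => lam x - lam i)
            (Fin.ext (by simp only [Fin.val_mk]; omega))

end AUX
end

section
/- Assume hypothesis (R1) and that L_k(t) < ∞ for every t ≥ t_0 and every k = 1,…,n. Let η > 0 and let z_1, z_2 : [t_0,∞) → ℝ be (n−2)-times continuously differentiable with Σ_{j=0}^{n-2} |z_m^(j)(t)| ≤ η for all t ≥ t_0 (m = 1,2). Then for every t ≥ t_0: Σ_{j=0}^{n-2} | ∫_{t_0}^∞ g_j(t,s) [ P(s, z_1(s),…,z_1^(n-2)(s)) − P(s, z_2(s),…,z_2^(n-2)(s)) ] ds | ≤ ( Σ_{k=1}^{n} k η^{k-1} L_k(t) ) · sup_{s≥t_0} Σ_{j=0}^{n-2} |z_1^(j)(s) − z_2^(j)(s)|. -/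
open MeasureTheory Filter Finset Real Set

section AuxLemmas

private lemma abs_pow_sub_pow' {η x y : ℝ} (hx : |x| ≤ η) (hy : |y| ≤ η) (m : ℕ) :
    |x ^ m - y ^ m| * η ≤ (m : ℝ) * η ^ m * |x - y| := by
  have hη0 : 0 ≤ η := le_trans (abs_nonneg x) hx
  cases m with
  | zero => simp
  | succ m =>
    have key : |x ^ (m + 1) - y ^ (m + 1)| ≤ ((m : ℝ) + 1) * η ^ m * |x - y| := by
      rw [← geom_sum₂_mul x y (m + 1), abs_mul]
      have hsum : |∑ i ∈ Finset.range (m + 1), x ^ i * y ^ (m + 1 - 1 - i)| ≤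
          ((m : ℝ) + 1) * η ^ m := by
        refine le_trans (Finset.abs_sum_le_sum_abs _ _) ?_
        have hterm : ∀ i ∈ Finset.range (m + 1), |x ^ i * y ^ (m + 1 - 1 - i)| ≤ η ^ m := by
          intro i hi
          rw [abs_mul, abs_pow, abs_pow]
          calc |x| ^ i * |y| ^ (m + 1 - 1 - i) ≤ η ^ i * η ^ (m + 1 - 1 - i) :=
                mul_le_mul (pow_le_pow_left₀ (abs_nonneg _) hx _)
                  (pow_le_pow_left₀ (abs_nonneg _) hy _) (by positivity) (by positivity)
            _ = η ^ m := by rw [← pow_add]; congr 1; simp at hi ⊢; omega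
        refine le_trans (Finset.sum_le_sum hterm) ?_
        rw [Finset.sum_const, Finset.card_range, nsmul_eq_mul]
        push_cast; exact le_rfl
      exact mul_le_mul_of_nonneg_right hsum (abs_nonneg _)
    calc |x ^ (m + 1) - y ^ (m + 1)| * η ≤ (((m : ℝ) + 1) * η ^ m * |x - y|) * η :=
          mul_le_mul_of_nonneg_right key hη0
      _ = ((m + 1 : ℕ) : ℝ) * η ^ (m + 1) * |x - y| := by push_cast; ring

private lemma abs_prod_pow_le' {ι : Type*} (s : Finset ι) (α : ι → ℕ) (y : ι → ℝ) {η : ℝ}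
    (hy : ∀ i, |y i| ≤ η) :
    |∏ i ∈ s, y i ^ α i| ≤ η ^ (∑ i ∈ s, α i) := by
  rw [Finset.abs_prod, ← Finset.prod_pow_eq_pow_sum]
  refine Finset.prod_le_prod (fun i _ => by positivity) (fun i _ => ?_)
  rw [abs_pow]
  exact pow_le_pow_left₀ (abs_nonneg _) (hy i) _

private lemma abs_prod_pow_sub' {ι : Type*} [DecidableEq ι] {η : ℝ} (hη0 : 0 ≤ η)
    (x y : ι → ℝ) (hx : ∀ i, |x i| ≤ η) (hy : ∀ i, |y i| ≤ η) (α : ι → ℕ)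
    (s : Finset ι) :
      |∏ i ∈ s, x i ^ α i - ∏ i ∈ s, y i ^ α i| * η ≤
        η ^ (∑ i ∈ s, α i) * ∑ i ∈ s, (α i : ℝ) * |x i - y i| := by
  induction s using Finset.induction_on with
  | empty => simp
  | @insert a s' ha ih =>
    rw [Finset.prod_insert ha, Finset.prod_insert ha, Finset.sum_insert ha, Finset.sum_insert ha]
    have hsplit : x a ^ α a * ∏ i ∈ s', x i ^ α i - y a ^ α a * ∏ i ∈ s', y i ^ α i
        = x a ^ α a * (∏ i ∈ s', x i ^ α i - ∏ i ∈ s', y i ^ α i)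
          + (x a ^ α a - y a ^ α a) * ∏ i ∈ s', y i ^ α i := by ring
    rw [hsplit]
    have h1 : |x a ^ α a| ≤ η ^ α a := by
      rw [abs_pow]; exact pow_le_pow_left₀ (abs_nonneg _) (hx a) _
    have h3 := abs_pow_sub_pow' (hx a) (hy a) (α a)
    have h4 : |∏ i ∈ s', y i ^ α i| ≤ η ^ (∑ i ∈ s', α i) := abs_prod_pow_le' s' α y hy
    have hA : |x a ^ α a * (∏ i ∈ s', x i ^ α i - ∏ i ∈ s', y i ^ α i)| * η
        ≤ η ^ α a * (η ^ (∑ i ∈ s', α i) * ∑ i ∈ s', (α i : ℝ) * |x i - y i|) := by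
      rw [abs_mul, mul_assoc]
      exact mul_le_mul h1 ih (by positivity) (by positivity)
    have hB : |(x a ^ α a - y a ^ α a) * ∏ i ∈ s', y i ^ α i| * η
        ≤ ((α a : ℝ) * η ^ α a * |x a - y a|) * η ^ (∑ i ∈ s', α i) := by
      rw [abs_mul]
      calc |x a ^ α a - y a ^ α a| * |∏ i ∈ s', y i ^ α i| * η
          = (|x a ^ α a - y a ^ α a| * η) * |∏ i ∈ s', y i ^ α i| := by ring
        _ ≤ ((α a : ℝ) * η ^ α a * |x a - y a|) * η ^ (∑ i ∈ s', α i) :=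
            mul_le_mul h3 h4 (abs_nonneg _) (by positivity)
    calc |x a ^ α a * (∏ i ∈ s', x i ^ α i - ∏ i ∈ s', y i ^ α i)
            + (x a ^ α a - y a ^ α a) * ∏ i ∈ s', y i ^ α i| * η
        ≤ (|x a ^ α a * (∏ i ∈ s', x i ^ α i - ∏ i ∈ s', y i ^ α i)|
            + |(x a ^ α a - y a ^ α a) * ∏ i ∈ s', y i ^ α i|) * η :=
          mul_le_mul_of_nonneg_right (abs_add_le _ _) hη0
      _ = |x a ^ α a * (∏ i ∈ s', x i ^ α i - ∏ i ∈ s', y i ^ α i)| * η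
            + |(x a ^ α a - y a ^ α a) * ∏ i ∈ s', y i ^ α i| * η := by ring
      _ ≤ η ^ α a * (η ^ (∑ i ∈ s', α i) * ∑ i ∈ s', (α i : ℝ) * |x i - y i|)
            + ((α a : ℝ) * η ^ α a * |x a - y a|) * η ^ (∑ i ∈ s', α i) := add_le_add hA hB
      _ = η ^ (α a + ∑ i ∈ s', α i) *
            ((α a : ℝ) * |x a - y a| + ∑ i ∈ s', (α i : ℝ) * |x i - y i|) := by
          rw [pow_add]; ring

private lemma mDeg_subset_mSet' {n d k : ℕ} (hk : k ≤ n) : mDeg n d k ⊆ mSet n d := by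
  intro α hα
  simp only [mDeg, mSet, Finset.mem_filter] at hα ⊢
  exact ⟨hα.1, hα.2 ▸ hk⟩

private lemma mSet_fiber' {n d k : ℕ} (hk : k ≤ n) :
    (mSet n d).filter (fun α => ∑ i, α i = k) = mDeg n d k := by
  unfold mSet mDeg
  rw [Finset.filter_filter]
  refine Finset.filter_congr fun α _ => ?_
  exact ⟨fun h => h.2, fun h => ⟨le_of_eq_of_le h hk, h⟩⟩

private lemma ppoly_lip' (n d : ℕ) (Ω : (Fin d → ℕ) → ℝ → ℝ) (s : ℝ) {η D : ℝ}
    (hη : 0 < η) (x y : Fin d → ℝ)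
    (hx : ∀ i, |x i| ≤ η) (hy : ∀ i, |y i| ≤ η) (hD : ∀ i, |x i - y i| ≤ D) :
    |Ppoly n d Ω s x - Ppoly n d Ω s y| ≤
      (∑ k ∈ Finset.Icc 1 n, (k : ℝ) * η ^ (k - 1) * ∑ α ∈ mDeg n d k, |Ω α s|) * D := by
  have hkey : ∀ k, 1 ≤ k → k ≤ n → ∀ α ∈ mDeg n d k,
      |∏ i, x i ^ α i - ∏ i, y i ^ α i| ≤ (k : ℝ) * η ^ (k - 1) * D := by
    intro k hk1 hkn α hαmem
    have hsum : ∑ i, α i = k := (Finset.mem_filter.1 hαmem).2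
    have h1 := abs_prod_pow_sub' hη.le x y hx hy α Finset.univ
    rw [hsum] at h1
    have h2 : ∑ i, (α i : ℝ) * |x i - y i| ≤ (k : ℝ) * D := by
      calc ∑ i, (α i : ℝ) * |x i - y i| ≤ ∑ i, (α i : ℝ) * D :=
            Finset.sum_le_sum fun i _ => mul_le_mul_of_nonneg_left (hD i) (by positivity)
        _ = (k : ℝ) * D := by rw [← Finset.sum_mul, ← Nat.cast_sum, hsum]
    have h3 : |∏ i, x i ^ α i - ∏ i, y i ^ α i| * η ≤ ((k : ℝ) * η ^ (k - 1) * D) * η := by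
      refine le_trans h1 ?_
      have hpow : η ^ k = η ^ (k - 1) * η := by rw [← pow_succ]; congr 1; omega
      calc η ^ k * ∑ i, (α i : ℝ) * |x i - y i| ≤ η ^ k * ((k : ℝ) * D) :=
            mul_le_mul_of_nonneg_left h2 (by positivity)
        _ = ((k : ℝ) * η ^ (k - 1) * D) * η := by rw [hpow]; ring
    exact le_of_mul_le_mul_right h3 hη
  have hsplit : |Ppoly n d Ω s x - Ppoly n d Ω s y| ≤
      ∑ k ∈ Finset.range (n + 1), ∑ α ∈ mDeg n d k,
        |Ω α s| * |∏ i, x i ^ α i - ∏ i, y i ^ α i| := by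
    unfold Ppoly
    rw [← Finset.sum_sub_distrib]
    refine le_trans (Finset.abs_sum_le_sum_abs _ _) ?_
    have hfib := Finset.sum_fiberwise_of_maps_to (s := mSet n d) (t := Finset.range (n + 1))
      (g := fun α : Fin d → ℕ => ∑ i, α i)
      (fun α hα => Finset.mem_range.2 (Nat.lt_succ_of_le (Finset.mem_filter.1 hα).2))
      (fun α => |Ω α s * ∏ i, x i ^ α i - Ω α s * ∏ i, y i ^ α i|)
    rw [← hfib]
    refine le_of_eq (Finset.sum_congr rfl fun k hk => ?_)
    rw [mSet_fiber' (Nat.lt_succ_iff.1 (Finset.mem_range.1 hk))]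
    exact Finset.sum_congr rfl fun α _ => by rw [← mul_sub, abs_mul]
  refine le_trans hsplit ?_
  have hzero : ∀ k ∈ Finset.range (n + 1), k ∉ Finset.Icc 1 n →
      (∑ α ∈ mDeg n d k, |Ω α s| * |∏ i, x i ^ α i - ∏ i, y i ^ α i|) = 0 := by
    intro k hk hk'
    have hk0 : k = 0 := by simp at hk hk'; omega
    subst hk0
    refine Finset.sum_eq_zero fun α hα => ?_
    have hz : ∀ i, α i = 0 := by
      have h := (Finset.mem_filter.1 hα).2
      intro i
      exact Finset.sum_eq_zero_iff.1 h i (Finset.mem_univ i)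
    simp [hz]
  rw [← Finset.sum_subset (fun k hk => Finset.mem_range.2 (by simp at hk; omega)) hzero]
  rw [Finset.sum_mul]
  refine Finset.sum_le_sum fun k hk => ?_
  simp only [Finset.mem_Icc] at hk
  calc ∑ α ∈ mDeg n d k, |Ω α s| * |∏ i, x i ^ α i - ∏ i, y i ^ α i|
      ≤ ∑ α ∈ mDeg n d k, |Ω α s| * ((k : ℝ) * η ^ (k - 1) * D) :=
        Finset.sum_le_sum fun α hαm =>
          mul_le_mul_of_nonneg_left (hkey k hk.1 hk.2 α hαm) (abs_nonneg _)
    _ = (k : ℝ) * η ^ (k - 1) * (∑ α ∈ mDeg n d k, |Ω α s|) * D := by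
        rw [← Finset.sum_mul]; ring

private lemma heav_measurable' : Measurable heav := by
  unfold heav
  exact Measurable.ite (measurableSet_le measurable_const measurable_id)
    measurable_const measurable_const

private lemma kern_measurable' {d : ℕ} (γ : Fin d → ℝ) (j : ℕ) (t : ℝ) :
    Measurable fun s => kern γ j t s := by
  unfold kern
  refine Measurable.const_mul (Finset.measurable_sum _ fun ℓ _ => ?_) _
  have h1 : Measurable fun s : ℝ => Real.exp (-γ ℓ * (t - s)) :=
    (Real.continuous_exp.comp (by continuity)).measurable
  have h2 : Measurable fun s : ℝ =>
      heav ((if 0 < γ ℓ then (1 : ℝ) else -1) * (t - s)) :=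
    heav_measurable'.comp (measurable_const.mul (measurable_const.sub measurable_id))
  exact (measurable_const.mul h1).mul h2

end AuxLemmas

theorem stmt15 (n : ℕ) (hn : 2 ≤ n) (t₀ : ℝ)
    (Ω : (Fin (n - 1) → ℕ) → ℝ → ℝ)
    (hΩ : ∀ α ∈ mSet n (n - 1), ContinuousOn (Ω α) (Set.Ici t₀))
    (γ : Fin (n - 1) → ℝ)
    -- (R1)
    (hγanti : StrictAnti γ) (hγne : ∀ ℓ, γ ℓ ≠ 0)
    -- finiteness of L_k(t)
    (hIntL : ∀ t ≥ t₀, ∀ k, 1 ≤ k → k ≤ n →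
      MeasureTheory.IntegrableOn
        (fun s => (∑ j ∈ Finset.range (n - 1), |kern γ j t s|) * ∑ α ∈ mDeg n (n - 1) k, |Ω α s|)
        (Set.Ioi t₀))
    (η : ℝ) (hη : 0 < η) (z₁ z₂ : ℝ → ℝ)
    (hz₁ : ContDiffOn ℝ (n - 2 : ℕ) z₁ (Set.Ici t₀))
    (hz₂ : ContDiffOn ℝ (n - 2 : ℕ) z₂ (Set.Ici t₀))
    (hb₁ : ∀ t ≥ t₀, ∑ j ∈ Finset.range (n - 1), |iDer t₀ j z₁ t| ≤ η)
    (hb₂ : ∀ t ≥ t₀, ∑ j ∈ Finset.range (n - 1), |iDer t₀ j z₂ t| ≤ η) :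
    ∀ t ≥ t₀,
      ∑ j ∈ Finset.range (n - 1),
        |∫ s in Set.Ioi t₀, kern γ j t s *
          (Ppoly n (n - 1) Ω s (fun q => iDer t₀ (q : ℕ) z₁ s) -
            Ppoly n (n - 1) Ω s (fun q => iDer t₀ (q : ℕ) z₂ s))| ≤
      (∑ k ∈ Finset.Icc 1 n, (k : ℝ) * η ^ (k - 1) * Lfun n t₀ γ Ω k t) *
        ⨆ s : Set.Ici t₀,
          ∑ j ∈ Finset.range (n - 1), |iDer t₀ j z₁ (s : ℝ) - iDer t₀ j z₂ (s : ℝ)| := by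
  intro t ht
  have hBdd : BddAbove (Set.range fun s : Set.Ici t₀ =>
      ∑ j ∈ Finset.range (n - 1), |iDer t₀ j z₁ (s : ℝ) - iDer t₀ j z₂ (s : ℝ)|) := by
    refine ⟨2 * η, ?_⟩
    rintro _ ⟨s, rfl⟩
    calc ∑ j ∈ Finset.range (n - 1), |iDer t₀ j z₁ (s : ℝ) - iDer t₀ j z₂ (s : ℝ)|
        ≤ ∑ j ∈ Finset.range (n - 1), (|iDer t₀ j z₁ (s : ℝ)| + |iDer t₀ j z₂ (s : ℝ)|) := by
          refine Finset.sum_le_sum fun j _ => ?_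
          rw [sub_eq_add_neg]
          exact le_trans (abs_add_le _ _) (by rw [abs_neg])
      _ = (∑ j ∈ Finset.range (n - 1), |iDer t₀ j z₁ (s : ℝ)|)
            + ∑ j ∈ Finset.range (n - 1), |iDer t₀ j z₂ (s : ℝ)| := Finset.sum_add_distrib
      _ ≤ η + η := add_le_add (hb₁ s s.2) (hb₂ s s.2)
      _ = 2 * η := by ring
  set D := (⨆ s : Set.Ici t₀,
      ∑ j ∈ Finset.range (n - 1), |iDer t₀ j z₁ (s : ℝ) - iDer t₀ j z₂ (s : ℝ)|) with hDdef
  have hDle : ∀ s, t₀ ≤ s →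
      ∑ j ∈ Finset.range (n - 1), |iDer t₀ j z₁ s - iDer t₀ j z₂ s| ≤ D :=
    fun s hs => le_ciSup hBdd (⟨s, hs⟩ : Set.Ici t₀)
  have hD0 : 0 ≤ D :=
    le_trans (Finset.sum_nonneg fun j _ => abs_nonneg _) (hDle t₀ le_rfl)
  have hΔle : ∀ s, t₀ ≤ s →
      |Ppoly n (n - 1) Ω s (fun q => iDer t₀ (q : ℕ) z₁ s) -
        Ppoly n (n - 1) Ω s (fun q => iDer t₀ (q : ℕ) z₂ s)| ≤
      (∑ k ∈ Finset.Icc 1 n, (k : ℝ) * η ^ (k - 1) *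
        ∑ α ∈ mDeg n (n - 1) k, |Ω α s|) * D := by
    intro s hs
    refine ppoly_lip' n (n - 1) Ω s hη _ _ ?_ ?_ ?_
    · intro i
      exact le_trans (Finset.single_le_sum (f := fun j => |iDer t₀ j z₁ s|)
        (fun j _ => abs_nonneg _) (Finset.mem_range.2 i.isLt)) (hb₁ s hs)
    · intro i
      exact le_trans (Finset.single_le_sum (f := fun j => |iDer t₀ j z₂ s|)
        (fun j _ => abs_nonneg _) (Finset.mem_range.2 i.isLt)) (hb₂ s hs)
    · intro i
      exact le_trans (Finset.single_le_sum (f := fun j => |iDer t₀ j z₁ s - iDer t₀ j z₂ s|)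
        (fun j _ => abs_nonneg _) (Finset.mem_range.2 i.isLt)) (hDle s hs)
  -- notation
  have hWnn : ∀ s : ℝ, 0 ≤ ∑ k ∈ Finset.Icc 1 n, (k : ℝ) * η ^ (k - 1) *
      ∑ α ∈ mDeg n (n - 1) k, |Ω α s| := by
    intro s
    refine Finset.sum_nonneg fun k _ => ?_
    have : (0:ℝ) ≤ ∑ α ∈ mDeg n (n - 1) k, |Ω α s| :=
      Finset.sum_nonneg fun α _ => abs_nonneg _
    positivity
  have hWaesm : AEStronglyMeasurable
      (fun s => ∑ k ∈ Finset.Icc 1 n, (k : ℝ) * η ^ (k - 1) *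
        ∑ α ∈ mDeg n (n - 1) k, |Ω α s|)
      (MeasureTheory.volume.restrict (Set.Ioi t₀)) := by
    refine Finset.aestronglyMeasurable_fun_sum _ fun k hk => ?_
    refine AEStronglyMeasurable.const_mul ?_ _
    refine Finset.aestronglyMeasurable_fun_sum _ fun α hα => ?_
    have hc : ContinuousOn (fun s => |Ω α s|) (Set.Ici t₀) :=
      (hΩ α (mDeg_subset_mSet' (Finset.mem_Icc.1 hk).2 hα)).abs
    exact (hc.mono Set.Ioi_subset_Ici_self).aestronglyMeasurable measurableSet_Ioi
  have hIntk : ∀ k ∈ Finset.Icc 1 n,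
      MeasureTheory.IntegrableOn
        (fun s => (∑ j ∈ Finset.range (n - 1), |kern γ j t s|) *
          ∑ α ∈ mDeg n (n - 1) k, |Ω α s|) (Set.Ioi t₀) := by
    intro k hk
    exact hIntL t ht k (Finset.mem_Icc.1 hk).1 (Finset.mem_Icc.1 hk).2
  have hBigEq : (fun s => (∑ j ∈ Finset.range (n - 1), |kern γ j t s|) *
        ((∑ k ∈ Finset.Icc 1 n, (k : ℝ) * η ^ (k - 1) *
          ∑ α ∈ mDeg n (n - 1) k, |Ω α s|) * D))
      = fun s => ∑ k ∈ Finset.Icc 1 n, ((k : ℝ) * η ^ (k - 1) * D) *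
          ((∑ j ∈ Finset.range (n - 1), |kern γ j t s|) *
            ∑ α ∈ mDeg n (n - 1) k, |Ω α s|) := by
    funext s
    calc (∑ j ∈ Finset.range (n - 1), |kern γ j t s|) *
          ((∑ k ∈ Finset.Icc 1 n, (k : ℝ) * η ^ (k - 1) *
            ∑ α ∈ mDeg n (n - 1) k, |Ω α s|) * D)
        = (∑ j ∈ Finset.range (n - 1), |kern γ j t s|) *
          (∑ k ∈ Finset.Icc 1 n, ((k : ℝ) * η ^ (k - 1) *
            ∑ α ∈ mDeg n (n - 1) k, |Ω α s|) * D) :=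
          congrArg (fun z => (∑ j ∈ Finset.range (n - 1), |kern γ j t s|) * z)
            (Finset.sum_mul _ _ _)
      _ = ∑ k ∈ Finset.Icc 1 n, (∑ j ∈ Finset.range (n - 1), |kern γ j t s|) *
            (((k : ℝ) * η ^ (k - 1) * ∑ α ∈ mDeg n (n - 1) k, |Ω α s|) * D) :=
          Finset.mul_sum _ _ _
      _ = ∑ k ∈ Finset.Icc 1 n, ((k : ℝ) * η ^ (k - 1) * D) *
            ((∑ j ∈ Finset.range (n - 1), |kern γ j t s|) *
              ∑ α ∈ mDeg n (n - 1) k, |Ω α s|) :=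
          Finset.sum_congr rfl fun k _ => by ring
  have hBig : MeasureTheory.IntegrableOn
      (fun s => (∑ j ∈ Finset.range (n - 1), |kern γ j t s|) *
        ((∑ k ∈ Finset.Icc 1 n, (k : ℝ) * η ^ (k - 1) *
          ∑ α ∈ mDeg n (n - 1) k, |Ω α s|) * D)) (Set.Ioi t₀) := by
    rw [hBigEq]
    exact MeasureTheory.integrable_finset_sum _ fun k hk => (hIntk k hk).const_mul _
  have hhj : ∀ j ∈ Finset.range (n - 1),
      MeasureTheory.IntegrableOn
        (fun s => |kern γ j t s| *
          ((∑ k ∈ Finset.Icc 1 n, (k : ℝ) * η ^ (k - 1) *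
            ∑ α ∈ mDeg n (n - 1) k, |Ω α s|) * D)) (Set.Ioi t₀) := by
    intro j hj
    refine MeasureTheory.Integrable.mono' hBig
      (((kern_measurable' γ j t).abs.aestronglyMeasurable).mul
        (hWaesm.mul aestronglyMeasurable_const)) ?_
    refine MeasureTheory.ae_of_all _ fun s => ?_
    rw [Real.norm_eq_abs, abs_of_nonneg (mul_nonneg (abs_nonneg _)
      (mul_nonneg (hWnn s) hD0))]
    refine mul_le_mul_of_nonneg_right ?_ (mul_nonneg (hWnn s) hD0)
    exact Finset.single_le_sum (f := fun i => |kern γ i t s|)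
      (fun i _ => abs_nonneg _) hj
  calc ∑ j ∈ Finset.range (n - 1),
        |∫ s in Set.Ioi t₀, kern γ j t s *
          (Ppoly n (n - 1) Ω s (fun q => iDer t₀ (q : ℕ) z₁ s) -
            Ppoly n (n - 1) Ω s (fun q => iDer t₀ (q : ℕ) z₂ s))|
      ≤ ∑ j ∈ Finset.range (n - 1),
        ∫ s in Set.Ioi t₀, |kern γ j t s| *
          ((∑ k ∈ Finset.Icc 1 n, (k : ℝ) * η ^ (k - 1) *
            ∑ α ∈ mDeg n (n - 1) k, |Ω α s|) * D) := by
        refine Finset.sum_le_sum fun j hj => ?_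
        have h1 : |∫ s in Set.Ioi t₀, kern γ j t s *
            (Ppoly n (n - 1) Ω s (fun q => iDer t₀ (q : ℕ) z₁ s) -
              Ppoly n (n - 1) Ω s (fun q => iDer t₀ (q : ℕ) z₂ s))| ≤
            ∫ s in Set.Ioi t₀, |kern γ j t s| *
              |Ppoly n (n - 1) Ω s (fun q => iDer t₀ (q : ℕ) z₁ s) -
                Ppoly n (n - 1) Ω s (fun q => iDer t₀ (q : ℕ) z₂ s)| := by
          simpa [Real.norm_eq_abs] using
            MeasureTheory.norm_integral_le_integral_norm
              (μ := MeasureTheory.volume.restrict (Set.Ioi t₀))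
              (fun s => kern γ j t s *
                (Ppoly n (n - 1) Ω s (fun q => iDer t₀ (q : ℕ) z₁ s) -
                  Ppoly n (n - 1) Ω s (fun q => iDer t₀ (q : ℕ) z₂ s)))
        refine le_trans h1 (MeasureTheory.integral_mono_of_nonneg
          (MeasureTheory.ae_of_all _ fun s => mul_nonneg (abs_nonneg _) (abs_nonneg _))
          (hhj j hj) ?_)
        refine (MeasureTheory.ae_restrict_iff' measurableSet_Ioi).2
          (MeasureTheory.ae_of_all _ fun s hs => ?_)
        exact mul_le_mul_of_nonneg_left (hΔle s (le_of_lt hs)) (abs_nonneg _)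
    _ = ∫ s in Set.Ioi t₀, (∑ j ∈ Finset.range (n - 1), |kern γ j t s|) *
          ((∑ k ∈ Finset.Icc 1 n, (k : ℝ) * η ^ (k - 1) *
            ∑ α ∈ mDeg n (n - 1) k, |Ω α s|) * D) := by
      rw [← MeasureTheory.integral_finset_sum _ hhj]
      refine MeasureTheory.integral_congr_ae (MeasureTheory.ae_of_all _ fun s => ?_)
      exact (Finset.sum_mul _ _ _).symm
    _ = ∑ k ∈ Finset.Icc 1 n, ((k : ℝ) * η ^ (k - 1) * D) *
          ∫ s in Set.Ioi t₀, (∑ j ∈ Finset.range (n - 1), |kern γ j t s|) *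
            ∑ α ∈ mDeg n (n - 1) k, |Ω α s| := by
      rw [hBigEq, MeasureTheory.integral_finset_sum _
        (fun k hk => (hIntk k hk).const_mul _)]
      exact Finset.sum_congr rfl fun k _ => MeasureTheory.integral_const_mul _ _
    _ = (∑ k ∈ Finset.Icc 1 n, (k : ℝ) * η ^ (k - 1) * Lfun n t₀ γ Ω k t) * D := by
      rw [Finset.sum_mul]
      refine Finset.sum_congr rfl fun k hk => ?_
      unfold Lfun
      ring
end
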